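/- The function F : ℝ³ → ℝ defined by F(t₁,t₂,t₃) = (1/2)t₁²t₃ + (1/2)t₁t₂² − (1/24)t₂⁴ + t₂·exp(t₃) satisfies the WDVV associativity equations: with η_{αβ} = ∂³F/∂t₁∂t_α∂t_β (the constant matrix with η₁₃ = η₃₁ = 1, η₂₂ = 1, other entries 0) and inverse η^{αβ}, one has Σ_{μ,ν} (∂³F/∂t_α∂t_β∂t_μ)·η^{μν}·(∂³F/∂t_ν∂t_γ∂t_δ) = Σ_{μ,ν} (∂³F/∂t_δ∂t_β∂t_μ)·η^{μν}·(∂³F/∂t_ν∂t_γ∂t_α) for all indices α,β,γ,δ ∈ {1,2,3} and all points of ℝ³. -/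

import Mathlib

open Real

/-- Partial derivative of a function of `n` real variables in the `i`-th coordinate
direction. -/
noncomputable def pd {n : ℕ} (i : Fin n) (f : (Fin n → ℝ) → ℝ) : (Fin n → ℝ) → ℝ :=
  fun t => fderiv ℝ f t (Pi.single i 1)

/-- The prepotential of the Frobenius manifold `ℂ³/W̃⁽¹⁾(A₂)`:
`F = ½t₁²t₃ + ½t₁t₂² − (1/24)t₂⁴ + t₂ e^{t₃}`. -/
noncomputable def Fa2 : (Fin 3 → ℝ) → ℝ :=
  fun t => (1/2) * (t 0)^2 * t 2 + (1/2) * t 0 * (t 1)^2 - (1/24) * (t 1)^4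
    + t 1 * Real.exp (t 2)

lemma hp (i : Fin 3) (t : Fin 3 → ℝ) :
    HasFDerivAt (𝕜 := ℝ) (fun t : Fin 3 → ℝ => t i) (ContinuousLinearMap.proj i) t :=
  hasFDerivAt_apply i t

lemma pd_coord (k i : Fin 3) : pd k (fun t : Fin 3 → ℝ => t i)
    = fun _ => (Pi.single k 1 : Fin 3 → ℝ) i := by
  funext t
  unfold pd
  rw [(hp i t).fderiv]
  simp

lemma pd_Fa2 (i : Fin 3) : pd i Fa2 = fun t =>
    (t 0 * t 2 + (1/2) * (t 1)^2) * (Pi.single i 1 : Fin 3 → ℝ) 0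
    + (t 0 * t 1 - (1/6) * (t 1)^3 + Real.exp (t 2)) * (Pi.single i 1 : Fin 3 → ℝ) 1
    + ((1/2) * (t 0)^2 + t 1 * Real.exp (t 2)) * (Pi.single i 1 : Fin 3 → ℝ) 2 := by
  funext t
  have h0sq := (hasDerivAt_pow 2 (t 0)).comp_hasFDerivAt t (hp 0 t)
  have h1sq := (hasDerivAt_pow 2 (t 1)).comp_hasFDerivAt t (hp 1 t)
  have h1q := (hasDerivAt_pow 4 (t 1)).comp_hasFDerivAt t (hp 1 t)
  have h := (((h0sq.const_mul (1/2)).mul (hp 2 t)).add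
      (((hp 0 t).const_mul (1/2)).mul h1sq)).sub
      (h1q.const_mul (1/24)) |>.add ((hp 1 t).mul (hp 2 t).exp)
  simp only [Function.comp_def, Pi.mul_def, Pi.add_def, Pi.sub_def] at h
  unfold pd Fa2
  rw [h.fderiv]
  simp
  ring

lemma pd_Fa2_0 : pd 0 Fa2 = fun t => t 0 * t 2 + (1/2) * (t 1)^2 := by
  rw [pd_Fa2]; funext t; norm_num [Pi.single_apply, Fin.ext_iff]

lemma pd_Fa2_1 : pd 1 Fa2 = fun t => t 0 * t 1 - (1/6) * (t 1)^3 + Real.exp (t 2) := by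
  rw [pd_Fa2]; funext t; norm_num [Pi.single_apply, Fin.ext_iff]

lemma pd_Fa2_2 : pd 2 Fa2 = fun t => (1/2) * (t 0)^2 + t 1 * Real.exp (t 2) := by
  rw [pd_Fa2]; funext t; norm_num [Pi.single_apply, Fin.ext_iff]

lemma pd_g0 (j : Fin 3) : pd j (fun t : Fin 3 → ℝ => t 0 * t 2 + (1/2) * (t 1)^2)
    = fun t => t 2 * (Pi.single j 1 : Fin 3 → ℝ) 0
      + t 1 * (Pi.single j 1 : Fin 3 → ℝ) 1
      + t 0 * (Pi.single j 1 : Fin 3 → ℝ) 2 := by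
  funext t
  have h1sq := (hasDerivAt_pow 2 (t 1)).comp_hasFDerivAt t (hp 1 t)
  have h := ((hp 0 t).mul (hp 2 t)).add (h1sq.const_mul (1/2))
  simp only [Function.comp_def, Pi.mul_def, Pi.add_def, Pi.sub_def] at h
  unfold pd
  rw [h.fderiv]
  simp
  ring

lemma pd_g1 (j : Fin 3) : pd j (fun t : Fin 3 → ℝ => t 0 * t 1 - (1/6) * (t 1)^3 + Real.exp (t 2))
    = fun t => t 1 * (Pi.single j 1 : Fin 3 → ℝ) 0
      + (t 0 - (1/2) * (t 1)^2) * (Pi.single j 1 : Fin 3 → ℝ) 1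
      + Real.exp (t 2) * (Pi.single j 1 : Fin 3 → ℝ) 2 := by
  funext t
  have h1cu := (hasDerivAt_pow 3 (t 1)).comp_hasFDerivAt t (hp 1 t)
  have h := (((hp 0 t).mul (hp 1 t)).sub (h1cu.const_mul (1/6))).add (hp 2 t).exp
  simp only [Function.comp_def, Pi.mul_def, Pi.add_def, Pi.sub_def] at h
  unfold pd
  rw [h.fderiv]
  simp
  ring

lemma pd_g2 (j : Fin 3) : pd j (fun t : Fin 3 → ℝ => (1/2) * (t 0)^2 + t 1 * Real.exp (t 2))
    = fun t => t 0 * (Pi.single j 1 : Fin 3 → ℝ) 0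
      + Real.exp (t 2) * (Pi.single j 1 : Fin 3 → ℝ) 1
      + t 1 * Real.exp (t 2) * (Pi.single j 1 : Fin 3 → ℝ) 2 := by
  funext t
  have h0sq := (hasDerivAt_pow 2 (t 0)).comp_hasFDerivAt t (hp 0 t)
  have h := (h0sq.const_mul (1/2)).add ((hp 1 t).mul (hp 2 t).exp)
  simp only [Function.comp_def, Pi.mul_def, Pi.add_def, Pi.sub_def] at h
  unfold pd
  rw [h.fderiv]
  simp
  ring

lemma pd_q (k : Fin 3) : pd k (fun t : Fin 3 → ℝ => t 0 - (1/2) * (t 1)^2)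
    = fun t => (Pi.single k 1 : Fin 3 → ℝ) 0 - t 1 * (Pi.single k 1 : Fin 3 → ℝ) 1 := by
  funext t
  have h1sq := (hasDerivAt_pow 2 (t 1)).comp_hasFDerivAt t (hp 1 t)
  have h := (hp 0 t).sub (h1sq.const_mul (1/2))
  simp only [Function.comp_def, Pi.mul_def, Pi.add_def, Pi.sub_def] at h
  unfold pd
  rw [h.fderiv]
  simp
  ring

lemma pd_e (k : Fin 3) : pd k (fun t : Fin 3 → ℝ => Real.exp (t 2))
    = fun t => Real.exp (t 2) * (Pi.single k 1 : Fin 3 → ℝ) 2 := by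
  funext t
  have h := (hp 2 t).exp
  unfold pd
  rw [h.fderiv]
  simp

lemma pd_te (k : Fin 3) : pd k (fun t : Fin 3 → ℝ => t 1 * Real.exp (t 2))
    = fun t => Real.exp (t 2) * (Pi.single k 1 : Fin 3 → ℝ) 1
      + t 1 * Real.exp (t 2) * (Pi.single k 1 : Fin 3 → ℝ) 2 := by
  funext t
  have h := (hp 1 t).mul (hp 2 t).exp
  simp only [Pi.mul_def] at h
  unfold pd
  rw [h.fderiv]
  simp
  ring

lemma pd00 : pd 0 (pd 0 Fa2) = fun t : Fin 3 → ℝ => t 2 := by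
  rw [pd_Fa2_0, pd_g0]; funext t; norm_num [Pi.single_apply, Fin.ext_iff]
lemma pd10 : pd 1 (pd 0 Fa2) = fun t : Fin 3 → ℝ => t 1 := by
  rw [pd_Fa2_0, pd_g0]; funext t; norm_num [Pi.single_apply, Fin.ext_iff]
lemma pd20 : pd 2 (pd 0 Fa2) = fun t : Fin 3 → ℝ => t 0 := by
  rw [pd_Fa2_0, pd_g0]; funext t; norm_num [Pi.single_apply, Fin.ext_iff]
lemma pd01 : pd 0 (pd 1 Fa2) = fun t : Fin 3 → ℝ => t 1 := by
  rw [pd_Fa2_1, pd_g1]; funext t; norm_num [Pi.single_apply, Fin.ext_iff]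
lemma pd11 : pd 1 (pd 1 Fa2) = fun t : Fin 3 → ℝ => t 0 - (1/2) * (t 1)^2 := by
  rw [pd_Fa2_1, pd_g1]; funext t; norm_num [Pi.single_apply, Fin.ext_iff]
lemma pd21 : pd 2 (pd 1 Fa2) = fun t : Fin 3 → ℝ => Real.exp (t 2) := by
  rw [pd_Fa2_1, pd_g1]; funext t; norm_num [Pi.single_apply, Fin.ext_iff]
lemma pd02 : pd 0 (pd 2 Fa2) = fun t : Fin 3 → ℝ => t 0 := by
  rw [pd_Fa2_2, pd_g2]; funext t; norm_num [Pi.single_apply, Fin.ext_iff]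
lemma pd12 : pd 1 (pd 2 Fa2) = fun t : Fin 3 → ℝ => Real.exp (t 2) := by
  rw [pd_Fa2_2, pd_g2]; funext t; norm_num [Pi.single_apply, Fin.ext_iff]
lemma pd22 : pd 2 (pd 2 Fa2) = fun t : Fin 3 → ℝ => t 1 * Real.exp (t 2) := by
  rw [pd_Fa2_2, pd_g2]; funext t; norm_num [Pi.single_apply, Fin.ext_iff]

lemma fin3_mk0 (h : 0 < 3) : (⟨0, h⟩ : Fin 3) = 0 := rfl
lemma fin3_mk1 (h : 1 < 3) : (⟨1, h⟩ : Fin 3) = 1 := rfl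
lemma fin3_mk2 (h : 2 < 3) : (⟨2, h⟩ : Fin 3) = 2 := rfl

lemma pd3_000 : pd 0 (pd 0 (pd 0 Fa2)) = fun _ : Fin 3 → ℝ => (0 : ℝ) := by
  rw [pd00, pd_coord 0 2]; funext t; norm_num [Pi.single_apply, Fin.ext_iff]

lemma pd3_100 : pd 1 (pd 0 (pd 0 Fa2)) = fun _ : Fin 3 → ℝ => (0 : ℝ) := by
  rw [pd00, pd_coord 1 2]; funext t; norm_num [Pi.single_apply, Fin.ext_iff]

lemma pd3_200 : pd 2 (pd 0 (pd 0 Fa2)) = fun _ : Fin 3 → ℝ => (1 : ℝ) := by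
  rw [pd00, pd_coord 2 2]; funext t; norm_num [Pi.single_apply, Fin.ext_iff]

lemma pd3_010 : pd 0 (pd 1 (pd 0 Fa2)) = fun _ : Fin 3 → ℝ => (0 : ℝ) := by
  rw [pd10, pd_coord 0 1]; funext t; norm_num [Pi.single_apply, Fin.ext_iff]

lemma pd3_110 : pd 1 (pd 1 (pd 0 Fa2)) = fun _ : Fin 3 → ℝ => (1 : ℝ) := by
  rw [pd10, pd_coord 1 1]; funext t; norm_num [Pi.single_apply, Fin.ext_iff]

lemma pd3_210 : pd 2 (pd 1 (pd 0 Fa2)) = fun _ : Fin 3 → ℝ => (0 : ℝ) := by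
  rw [pd10, pd_coord 2 1]; funext t; norm_num [Pi.single_apply, Fin.ext_iff]

lemma pd3_020 : pd 0 (pd 2 (pd 0 Fa2)) = fun _ : Fin 3 → ℝ => (1 : ℝ) := by
  rw [pd20, pd_coord 0 0]; funext t; norm_num [Pi.single_apply, Fin.ext_iff]

lemma pd3_120 : pd 1 (pd 2 (pd 0 Fa2)) = fun _ : Fin 3 → ℝ => (0 : ℝ) := by
  rw [pd20, pd_coord 1 0]; funext t; norm_num [Pi.single_apply, Fin.ext_iff]

lemma pd3_220 : pd 2 (pd 2 (pd 0 Fa2)) = fun _ : Fin 3 → ℝ => (0 : ℝ) := by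
  rw [pd20, pd_coord 2 0]; funext t; norm_num [Pi.single_apply, Fin.ext_iff]

lemma pd3_001 : pd 0 (pd 0 (pd 1 Fa2)) = fun _ : Fin 3 → ℝ => (0 : ℝ) := by
  rw [pd01, pd_coord 0 1]; funext t; norm_num [Pi.single_apply, Fin.ext_iff]

lemma pd3_101 : pd 1 (pd 0 (pd 1 Fa2)) = fun _ : Fin 3 → ℝ => (1 : ℝ) := by
  rw [pd01, pd_coord 1 1]; funext t; norm_num [Pi.single_apply, Fin.ext_iff]

lemma pd3_201 : pd 2 (pd 0 (pd 1 Fa2)) = fun _ : Fin 3 → ℝ => (0 : ℝ) := by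
  rw [pd01, pd_coord 2 1]; funext t; norm_num [Pi.single_apply, Fin.ext_iff]

lemma pd3_011 : pd 0 (pd 1 (pd 1 Fa2)) = fun _ : Fin 3 → ℝ => (1 : ℝ) := by
  rw [pd11, pd_q 0]; funext t; norm_num [Pi.single_apply, Fin.ext_iff]

lemma pd3_111 : pd 1 (pd 1 (pd 1 Fa2)) = fun t : Fin 3 → ℝ => (-t 1 : ℝ) := by
  rw [pd11, pd_q 1]; funext t; norm_num [Pi.single_apply, Fin.ext_iff]

lemma pd3_211 : pd 2 (pd 1 (pd 1 Fa2)) = fun _ : Fin 3 → ℝ => (0 : ℝ) := by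
  rw [pd11, pd_q 2]; funext t; norm_num [Pi.single_apply, Fin.ext_iff]

lemma pd3_021 : pd 0 (pd 2 (pd 1 Fa2)) = fun _ : Fin 3 → ℝ => (0 : ℝ) := by
  rw [pd21, pd_e 0]; funext t; norm_num [Pi.single_apply, Fin.ext_iff]

lemma pd3_121 : pd 1 (pd 2 (pd 1 Fa2)) = fun _ : Fin 3 → ℝ => (0 : ℝ) := by
  rw [pd21, pd_e 1]; funext t; norm_num [Pi.single_apply, Fin.ext_iff]

lemma pd3_221 : pd 2 (pd 2 (pd 1 Fa2)) = fun t : Fin 3 → ℝ => (Real.exp (t 2) : ℝ) := by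
  rw [pd21, pd_e 2]; funext t; norm_num [Pi.single_apply, Fin.ext_iff]

lemma pd3_002 : pd 0 (pd 0 (pd 2 Fa2)) = fun _ : Fin 3 → ℝ => (1 : ℝ) := by
  rw [pd02, pd_coord 0 0]; funext t; norm_num [Pi.single_apply, Fin.ext_iff]

lemma pd3_102 : pd 1 (pd 0 (pd 2 Fa2)) = fun _ : Fin 3 → ℝ => (0 : ℝ) := by
  rw [pd02, pd_coord 1 0]; funext t; norm_num [Pi.single_apply, Fin.ext_iff]

lemma pd3_202 : pd 2 (pd 0 (pd 2 Fa2)) = fun _ : Fin 3 → ℝ => (0 : ℝ) := by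
  rw [pd02, pd_coord 2 0]; funext t; norm_num [Pi.single_apply, Fin.ext_iff]

lemma pd3_012 : pd 0 (pd 1 (pd 2 Fa2)) = fun _ : Fin 3 → ℝ => (0 : ℝ) := by
  rw [pd12, pd_e 0]; funext t; norm_num [Pi.single_apply, Fin.ext_iff]

lemma pd3_112 : pd 1 (pd 1 (pd 2 Fa2)) = fun _ : Fin 3 → ℝ => (0 : ℝ) := by
  rw [pd12, pd_e 1]; funext t; norm_num [Pi.single_apply, Fin.ext_iff]

lemma pd3_212 : pd 2 (pd 1 (pd 2 Fa2)) = fun t : Fin 3 → ℝ => (Real.exp (t 2) : ℝ) := by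
  rw [pd12, pd_e 2]; funext t; norm_num [Pi.single_apply, Fin.ext_iff]

lemma pd3_022 : pd 0 (pd 2 (pd 2 Fa2)) = fun _ : Fin 3 → ℝ => (0 : ℝ) := by
  rw [pd22, pd_te 0]; funext t; norm_num [Pi.single_apply, Fin.ext_iff]

lemma pd3_122 : pd 1 (pd 2 (pd 2 Fa2)) = fun t : Fin 3 → ℝ => (Real.exp (t 2) : ℝ) := by
  rw [pd22, pd_te 1]; funext t; norm_num [Pi.single_apply, Fin.ext_iff]

lemma pd3_222 : pd 2 (pd 2 (pd 2 Fa2)) = fun t : Fin 3 → ℝ => (t 1 * Real.exp (t 2) : ℝ) := by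
  rw [pd22, pd_te 2]; funext t; norm_num [Pi.single_apply, Fin.ext_iff]


/-- The prepotential `F = ½t₁²t₃ + ½t₁t₂² − (1/24)t₂⁴ + t₂e^{t₃}` of `ℂ³/W̃⁽¹⁾(A₂)`
satisfies the WDVV associativity equations: `η_{αβ} = ∂³F/∂t₁∂t_α∂t_β` is the constant
matrix with `η₁₃ = η₃₁ = η₂₂ = 1` (other entries `0`), which is its own inverse
`η^{αβ}`, and `Σ_{μν} F_{αβμ} η^{μν} F_{νγδ} = Σ_{μν} F_{δβμ} η^{μν} F_{νγα}`. -/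
theorem WDVV_tildeW1_A2 :
    (∀ t : Fin 3 → ℝ, ∀ α β : Fin 3,
      pd 0 (pd α (pd β Fa2)) t
        = (!![0, 0, 1; 0, 1, 0; 1, 0, 0] : Matrix (Fin 3) (Fin 3) ℝ) α β) ∧
    (∀ t : Fin 3 → ℝ, ∀ α β γ δ : Fin 3,
      (∑ μ, ∑ ν, pd α (pd β (pd μ Fa2)) t
          * (!![0, 0, 1; 0, 1, 0; 1, 0, 0] : Matrix (Fin 3) (Fin 3) ℝ) μ ν
          * pd ν (pd γ (pd δ Fa2)) t)
        = ∑ μ, ∑ ν, pd δ (pd β (pd μ Fa2)) t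
          * (!![0, 0, 1; 0, 1, 0; 1, 0, 0] : Matrix (Fin 3) (Fin 3) ℝ) μ ν
          * pd ν (pd γ (pd α Fa2)) t) := by
  constructor
  · intro t α β
    fin_cases α <;> fin_cases β <;>
      norm_num [fin3_mk0, fin3_mk1, fin3_mk2, Matrix.cons_val, Matrix.vecHead, Matrix.vecTail, Function.comp, pd3_000, pd3_100, pd3_200, pd3_010, pd3_110, pd3_210, pd3_020, pd3_120, pd3_220, pd3_001, pd3_101, pd3_201, pd3_011, pd3_111, pd3_211, pd3_021, pd3_121, pd3_221, pd3_002, pd3_102, pd3_202, pd3_012, pd3_112, pd3_212, pd3_022, pd3_122, pd3_222] <;> rfl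
  · intro t α β γ δ
    fin_cases α <;> fin_cases β <;> fin_cases γ <;> fin_cases δ <;>
      · simp [fin3_mk0, fin3_mk1, fin3_mk2, Function.comp, Fin.sum_univ_three, pd3_000, pd3_100, pd3_200, pd3_010, pd3_110, pd3_210, pd3_020, pd3_120, pd3_220, pd3_001, pd3_101, pd3_201, pd3_011, pd3_111, pd3_211, pd3_021, pd3_121, pd3_221, pd3_002, pd3_102, pd3_202, pd3_012, pd3_112, pd3_212, pd3_022, pd3_122, pd3_222,
          Matrix.cons_val', Matrix.cons_val_zero, Matrix.cons_val_one,
          Matrix.head_cons, Matrix.cons_val_fin_one, Matrix.vecHead, Matrix.vecTail,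
          Matrix.empty_val']
        try ring
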